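/- Let M be a 3-connected matroid containing a segment (a subset L of E(M) with r(L) = 2) with |L| ≥ 4. Then for every ℓ ∈ L, the matroid M\ℓ is 3-connected. -/

import Mathlib

open Set Matroid

namespace NDP

variable {α : Type*}

/-- The rank of a set in a matroid: the supremum of sizes of independent subsets. -/
noncomputable def rk (M : Matroid α) (X : Set α) : ℕ :=
  sSup {n | ∃ I, M.Indep I ∧ I ⊆ X ∧ I.ncard = n}

/-- A circuit: a minimal dependent subset of the ground set. -/
def Circuit (M : Matroid α) (C : Set α) : Prop :=
  C ⊆ M.E ∧ ¬ M.Indep C ∧ ∀ x ∈ C, M.Indep (C \ {x})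

/-- A cocircuit: a circuit of the dual matroid. -/
def Cocircuit (M : Matroid α) (C : Set α) : Prop := Circuit M✶ C

/-- Deletion of a set of elements. -/
def delete (M : Matroid α) (D : Set α) : Matroid α := M ↾ (M.E \ D)

/-- Contraction of a set of elements. -/
def contract (M : Matroid α) (C : Set α) : Matroid α := (delete M✶ C)✶

/-- The connectivity function `λ_M(X) = r(X) + r(E − X) − r(M)`. -/
noncomputable def lambda (M : Matroid α) (X : Set α) : ℤ :=
  (rk M X : ℤ) + (rk M (M.E \ X) : ℤ) - (rk M M.E : ℤ)

/-- `S` gives a `k`-separation `(S, E − S)` of `M`. -/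
def IsKSeparation (M : Matroid α) (k : ℕ) (S : Set α) : Prop :=
  S ⊆ M.E ∧ lambda M S ≤ (k : ℤ) - 1 ∧ k ≤ S.ncard ∧ k ≤ (M.E \ S).ncard

/-- A matroid is connected (2-connected) if it has no 1-separation. -/
def Connected (M : Matroid α) : Prop := ∀ S, ¬ IsKSeparation M 1 S

/-- A matroid is 3-connected if it has no `k`-separation for `k < 3`. -/
def ThreeConnected (M : Matroid α) : Prop := ∀ k < 3, ∀ S, ¬ IsKSeparation M k S

/-- Isomorphism of two matroids on the same type. -/
def Iso (M N : Matroid α) : Prop :=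
  ∃ e : M.E ≃ N.E,
    ∀ I : Set M.E, M.Indep (Subtype.val '' I) ↔ N.Indep (Subtype.val '' (e '' I))

/-- `N` is a minor of `M`. -/
def IsMinor (N M : Matroid α) : Prop :=
  ∃ C D : Set α, C ⊆ M.E ∧ D ⊆ M.E ∧ Disjoint C D ∧ N = delete (contract M C) D

/-- `M` has a minor isomorphic to `N`. -/
def HasMinorIso (M N : Matroid α) : Prop := ∃ M', IsMinor M' M ∧ Iso M' N

/-- `N` is a simplification of `M`: the restriction of `M` to a set of representatives,
one from each parallel class of nonloop elements. -/
def IsSimplification (M N : Matroid α) : Prop :=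
  ∃ X ⊆ M.E, N = M ↾ X ∧
    (∀ e ∈ X, M.Indep {e}) ∧
    (∀ e f, e ∈ X → f ∈ X → e ∈ M.closure {f} → e = f) ∧
    (∀ e ∈ M.E, M.Indep {e} → ∃ f ∈ X, e ∈ M.closure {f})

/-- `si M` is 3-connected. -/
def SiThreeConnected (M : Matroid α) : Prop :=
  ∀ N, IsSimplification M N → ThreeConnected N

/-- `co M` is 3-connected; the cosimplification is the dual of the simplification of the dual. -/
def CoThreeConnected (M : Matroid α) : Prop :=
  ∀ N, IsSimplification M✶ N → ThreeConnected N✶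

section Aux

variable {M : Matroid α} {X Y I J S L : Set α} {x y l : α}

lemma indep_finite [M.Finite] (hI : M.Indep I) : I.Finite :=
  M.set_finite I hI.subset_ground

lemma rk_bddAbove (M : Matroid α) [M.Finite] (X : Set α) :
    BddAbove {n | ∃ I, M.Indep I ∧ I ⊆ X ∧ I.ncard = n} := by
  refine ⟨M.E.ncard, ?_⟩
  rintro n ⟨I, hI, -, rfl⟩
  exact ncard_le_ncard hI.subset_ground M.ground_finite

lemma le_rk [M.Finite] (hJ : M.Indep J) (hJX : J ⊆ X) : J.ncard ≤ rk M X :=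
  le_csSup (rk_bddAbove M X) ⟨J, hJ, hJX, rfl⟩

lemma rk_eq_ncard_of_basis' [M.Finite] (hI : M.IsBasis' I X) : rk M X = I.ncard := by
  refine le_antisymm (csSup_le ⟨0, ∅, M.empty_indep, empty_subset X, by simp⟩ ?_)
    (le_rk hI.indep hI.subset)
  rintro n ⟨J, hJ, hJX, rfl⟩
  obtain ⟨J', hJ'X, hJJ'⟩ := hJ.subset_isBasis'_of_subset hJX
  have hcard : J'.encard = I.encard :=
    (isBase_restrict_iff'.2 hJ'X).encard_eq_encard_of_isBase (isBase_restrict_iff'.2 hI)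
  have hJ'I : J'.ncard = I.ncard := by rw [Set.ncard_def, hcard, ← Set.ncard_def]
  rw [← hJ'I]
  exact ncard_le_ncard hJJ' (indep_finite hJ'X.indep)

lemma rk_mono [M.Finite] (h : X ⊆ Y) : rk M X ≤ rk M Y := by
  obtain ⟨I, hI⟩ := M.exists_isBasis' X
  rw [rk_eq_ncard_of_basis' hI]
  exact le_rk hI.indep (hI.subset.trans h)

lemma rk_eq_of_subset_closure [M.Finite] (hXY : X ⊆ Y) (hY : Y ⊆ M.closure X) :
    rk M Y = rk M X := by
  obtain ⟨I, hI⟩ := M.exists_isBasis' X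
  have hIY : M.IsBasis' I Y := by
    rw [isBasis'_iff_isBasis_inter_ground]
    refine hI.indep.isBasis_of_subset_of_subset_closure
      (subset_inter (hI.subset.trans hXY) hI.indep.subset_ground) ?_
    rw [hI.closure_eq_closure]
    exact inter_subset_left.trans hY
  rw [rk_eq_ncard_of_basis' hI, rk_eq_ncard_of_basis' hIY]

lemma rk_submod_ge (M : Matroid α) [M.Finite] (X : Set α) :
    rk M M.E ≤ rk M X + rk M (M.E \ X) := by
  obtain ⟨I, hI⟩ := M.exists_isBasis' X
  obtain ⟨B, hB, hIB⟩ := hI.indep.exists_isBase_superset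
  have hBE : rk M M.E = B.ncard := by
    refine rk_eq_ncard_of_basis' ?_
    rw [← isBase_restrict_iff', restrict_ground_eq_self]
    exact hB
  have h1 : (B ∩ X).ncard ≤ rk M X :=
    le_rk (hB.indep.subset inter_subset_left) inter_subset_right
  have h2 : (B \ X).ncard ≤ rk M (M.E \ X) :=
    le_rk (hB.indep.subset diff_subset) (diff_subset_diff_left hB.subset_ground)
  have h3 : (B ∩ X).ncard + (B \ X).ncard = B.ncard :=
    ncard_inter_add_ncard_diff_eq_ncard B X (indep_finite hB.indep)
  omega

lemma rk_restrict {R : Set α} (hXR : X ⊆ R) : rk (M ↾ R) X = rk M X := by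
  unfold rk
  congr 1
  ext n
  constructor
  · rintro ⟨I, hI, hIX, rfl⟩
    exact ⟨I, (restrict_indep_iff.1 hI).1, hIX, rfl⟩
  · rintro ⟨I, hI, hIX, rfl⟩
    exact ⟨I, restrict_indep_iff.2 ⟨hI, hIX.trans hXR⟩, hIX, rfl⟩

lemma lambda_nonneg (M : Matroid α) [M.Finite] (X : Set α) : 0 ≤ lambda M X := by
  have := rk_submod_ge M X
  unfold lambda
  omega

lemma lambda_compl (hS : S ⊆ M.E) : lambda M (M.E \ S) = lambda M S := by
  unfold lambda
  rw [diff_diff_cancel_left hS]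
  ring

lemma ksep_compl {k : ℕ} (h : IsKSeparation M k S) : IsKSeparation M k (M.E \ S) := by
  obtain ⟨h1, h2, h3, h4⟩ := h
  exact ⟨diff_subset, by rw [lambda_compl h1]; exact h2, h4,
    by rw [diff_diff_cancel_left h1]; exact h3⟩

lemma rk_singleton_loop [M.Finite] (h : ¬ M.Indep {x}) : rk M {x} = 0 := by
  have hset : {n | ∃ I, M.Indep I ∧ I ⊆ ({x} : Set α) ∧ I.ncard = n} = {0} := by
    ext n
    simp only [mem_setOf_eq, mem_singleton_iff]
    constructor
    · rintro ⟨I, hI, hIx, rfl⟩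
      rcases subset_singleton_iff_eq.1 hIx with rfl | rfl
      · simp
      · exact absurd hI h
    · rintro rfl
      exact ⟨∅, M.empty_indep, empty_subset _, by simp⟩
  unfold rk
  rw [hset, csSup_singleton]

lemma nonloop_of_threeConn [M.Finite] (hM : ThreeConnected M) (hE : 4 ≤ M.E.ncard)
    (hx : x ∈ M.E) : M.Indep {x} := by
  by_contra h
  refine hM 1 (by norm_num) {x} ⟨singleton_subset_iff.2 hx, ?_, ?_, ?_⟩
  · have h1 : rk M {x} = 0 := rk_singleton_loop h
    have h2 : rk M (M.E \ {x}) ≤ rk M M.E := rk_mono diff_subset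
    unfold lambda
    push_cast
    omega
  · simp
  · have : (M.E \ {x}).ncard = M.E.ncard - 1 := by
      rw [ncard_diff (singleton_subset_iff.2 hx) (finite_singleton x), ncard_singleton]
    omega

lemma pair_indep_of_threeConn [M.Finite] (hM : ThreeConnected M) (hE : 4 ≤ M.E.ncard)
    (hx : x ∈ M.E) (hy : y ∈ M.E) (hxy : x ≠ y) : M.Indep {x, y} := by
  by_contra h
  have hIx : M.Indep {x} := nonloop_of_threeConn hM hE hx
  have hycl : y ∈ M.closure {x} := by
    have hdep : M.Dep (insert y {x}) := by
      rw [← not_indep_iff (insert_subset hy (singleton_subset_iff.2 hx))]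
      rwa [show insert y ({x} : Set α) = {x, y} from pair_comm y x]
    exact (hIx.insert_dep_iff.1 hdep).1
  have hrk1 : rk M {x} = 1 := by
    rw [rk_eq_ncard_of_basis' hIx.isBasis_self.isBasis', ncard_singleton]
  have hrkxy : rk M {x, y} = 1 := by
    rw [rk_eq_of_subset_closure (singleton_subset_iff.2 (mem_insert x {y}))
      (pair_subset (M.mem_closure_self x hx) hycl), hrk1]
  refine hM 2 (by norm_num) {x, y} ⟨pair_subset hx hy, ?_, ?_, ?_⟩
  · have h2 : rk M (M.E \ {x, y}) ≤ rk M M.E := rk_mono diff_subset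
    unfold lambda
    push_cast
    omega
  · rw [ncard_pair hxy]
  · have : (M.E \ {x, y}).ncard = M.E.ncard - 2 := by
      rw [ncard_diff (pair_subset hx hy) (toFinite _), ncard_pair hxy]
    omega

lemma segment_closure [M.Finite] (hM : ThreeConnected M) (hLE : L ⊆ M.E)
    (hr : rk M L = 2) (hE : 4 ≤ M.E.ncard) (hx : x ∈ L) (hy : y ∈ L) (hxy : x ≠ y) :
    L ⊆ M.closure {x, y} := by
  have hp : M.Indep {x, y} := pair_indep_of_threeConn hM hE (hLE hx) (hLE hy) hxy
  obtain ⟨I, hIL, hpI⟩ := hp.subset_isBasis'_of_subset (pair_subset hx hy)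
  have hIcard : I.ncard = 2 := by rw [← rk_eq_ncard_of_basis' hIL, hr]
  have hIxy : {x, y} = I :=
    eq_of_subset_of_ncard_le hpI (by rw [hIcard, ncard_pair hxy]) (indep_finite hIL.indep)
  rw [hIxy]
  have h := hIL.isBasis_inter_ground.subset_closure
  rwa [inter_eq_self_of_subset_left hLE] at h

lemma main_aux [M.Finite] (hM : ThreeConnected M) (hLE : L ⊆ M.E) (hr : rk M L = 2)
    (hE4 : 4 ≤ M.E.ncard) (hl : l ∈ L) {k : ℕ} (hk : k < 3) {S : Set α}
    (hsep : IsKSeparation (M ↾ (M.E \ {l})) k S)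
    (hx : x ∈ L \ {l}) (hxS : x ∈ S) (hy : y ∈ L \ {l}) (hyS : y ∈ S) (hxy : x ≠ y) :
    False := by
  obtain ⟨hS1, hS2, hS3, hS4⟩ := hsep
  have hlE : l ∈ M.E := hLE hl
  have hSE' : S ⊆ M.E \ {l} := hS1
  have hSE : S ⊆ M.E := hSE'.trans diff_subset
  have hlcl : l ∈ M.closure {x, y} := segment_closure hM hLE hr hE4 hx.1 hy.1 hxy hl
  have hlclS : l ∈ M.closure S := closure_subset_closure M (pair_subset hxS hyS) hlcl
  have hrkS : rk M (insert l S) = rk M S :=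
    rk_eq_of_subset_closure (subset_insert l S)
      (insert_subset hlclS (M.subset_closure S hSE))
  have hxE' : x ∈ M.E \ {l} := ⟨hLE hx.1, hx.2⟩
  have hyE' : y ∈ M.E \ {l} := ⟨hLE hy.1, hy.2⟩
  have hgr : rk M M.E = rk M (M.E \ {l}) := by
    refine rk_eq_of_subset_closure diff_subset ?_
    have hl' : l ∈ M.closure (M.E \ {l}) :=
      closure_subset_closure M (pair_subset hxE' hyE') hlcl
    intro a ha
    rcases eq_or_ne a l with rfl | hne
    · exact hl'
    · exact M.subset_closure _ diff_subset ⟨ha, hne⟩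
  have hdiff : M.E \ insert l S = (M.E \ {l}) \ S := by
    rw [diff_diff, singleton_union]
  have e1 : rk (M ↾ (M.E \ {l})) S = rk M S := rk_restrict hSE'
  have e2 : rk (M ↾ (M.E \ {l})) ((M.E \ {l}) \ S) = rk M ((M.E \ {l}) \ S) :=
    rk_restrict diff_subset
  have e3 : rk (M ↾ (M.E \ {l})) (M.E \ {l}) = rk M (M.E \ {l}) :=
    rk_restrict Subset.rfl
  refine hM k hk (insert l S) ⟨insert_subset hlE hSE, ?_, ?_, ?_⟩
  · unfold lambda at hS2 ⊢
    rw [restrict_ground_eq, e1, e2, e3] at hS2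
    rw [hrkS, hdiff, hgr]
    exact hS2
  · refine hS3.trans (ncard_le_ncard (subset_insert l S) ?_)
    exact M.ground_finite.subset (insert_subset hlE hSE)
  · rw [hdiff]
    exact hS4

end Aux

end NDP

/-- Deleting any element of a segment of size at least 4 in a
3-connected matroid keeps the matroid 3-connected. -/
theorem statement_12 {α : Type*} (M : Matroid α) [M.Finite] (hM : NDP.ThreeConnected M)
    (L : Set α) (hLE : L ⊆ M.E) (hr : NDP.rk M L = 2) (hL4 : 4 ≤ L.ncard) :
    ∀ l ∈ L, NDP.ThreeConnected (NDP.delete M {l}) := by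
  intro l hl k hk S hS
  haveI hfin : (M ↾ (M.E \ {l})).Finite := ⟨M.ground_finite.diff (t := {l})⟩
  have hE4 : 4 ≤ M.E.ncard := hL4.trans (Set.ncard_le_ncard hLE M.ground_finite)
  have hMdel : NDP.delete M {l} = M ↾ (M.E \ {l}) := rfl
  rw [hMdel] at hS
  rcases Nat.eq_zero_or_pos k with rfl | hk1
  · have h0 := NDP.lambda_nonneg (M ↾ (M.E \ {l})) S
    have h := hS.2.1
    push_cast at h
    omega
  · have hLfin : (L \ {l}).Finite := M.ground_finite.subset (diff_subset.trans hLE)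
    have hL' : 3 ≤ (L \ {l}).ncard := by
      have := Set.ncard_diff (singleton_subset_iff.2 hl)
        (Set.finite_singleton l) (t := L)
      rw [Set.ncard_singleton] at this
      omega
    have hsplit : ((L \ {l}) ∩ S).ncard + ((L \ {l}) \ S).ncard = (L \ {l}).ncard :=
      Set.ncard_inter_add_ncard_diff_eq_ncard _ _ hLfin
    rcases le_or_gt 2 ((L \ {l}) ∩ S).ncard with h2 | h2
    · obtain ⟨x, y, hx, hy, hxy⟩ :=
        (Set.one_lt_ncard_iff (hLfin.inter_of_left S)).1 (by omega)
      exact NDP.main_aux hM hLE hr hE4 hl hk hS hx.1 hx.2 hy.1 hy.2 hxy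
    · obtain ⟨x, y, hx, hy, hxy⟩ :=
        (Set.one_lt_ncard_iff (hLfin.diff (t := S))).1 (by omega)
      have hT := NDP.ksep_compl hS
      exact NDP.main_aux hM hLE hr hE4 hl hk hT hx.1
        ⟨⟨hLE hx.1.1, hx.1.2⟩, hx.2⟩ hy.1 ⟨⟨hLE hy.1.1, hy.1.2⟩, hy.2⟩ hxy
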